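/- arXiv:1812.06825 — 4 statements merged into one kernel-verified Lean document; each statement's English description precedes it below -/
import Mathlib

section
/- For every β > 0 and every x ∈ ℝ, the third derivative of f_β satisfies |f_β‴(x)| ≤ 3/β²; in particular the derivative f_β′ is (2, 3/β²)-smooth, i.e., f_β′ is twice continuously differentiable with second derivative bounded in absolute value by 3/β². -/
/-- For β > 0, the third derivative of the smoothed hinge loss `f_β` is bounded
in absolute value by `3/β²`; in particular `f_β′` is twice continuously
differentiable with second derivative bounded in absolute value by `3/β²`. -/
theorem smoothed_hinge_deriv_smooth (β : ℝ) (hβ : 0 < β) :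
    let f : ℝ → ℝ := fun x => (1 / 2 - x + Real.sqrt ((1 / 2 - x) ^ 2 + β ^ 2)) / 2
    ContDiff ℝ 2 (deriv f) ∧
    (∀ x : ℝ, |deriv (deriv (deriv f)) x| ≤ 3 / β ^ 2) := by
  intro f
  set q : ℝ → ℝ := fun x => (1 / 2 - x) ^ 2 + β ^ 2 with hqdef
  set s : ℝ → ℝ := fun x => Real.sqrt (q x) with hsdef
  have hq : ∀ x, 0 < q x := fun x => by positivity
  have hs : ∀ x, 0 < s x := fun x => Real.sqrt_pos.mpr (hq x)
  have hs2 : ∀ x, s x ^ 2 = q x := fun x => Real.sq_sqrt (hq x).le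
  have hs2' : ∀ x, s x ^ 2 = (1 / 2 - x) ^ 2 + β ^ 2 := hs2
  have hsne : ∀ x, s x ≠ 0 := fun x => (hs x).ne'
  have h1 : ∀ x : ℝ, HasDerivAt (fun x : ℝ => 1 / 2 - x) (-1) x := fun x =>
    (hasDerivAt_id x).const_sub (1 / 2)
  have hq' : ∀ x, HasDerivAt q (2 * x - 1) x := by
    intro x
    have := ((h1 x).pow 2).add_const (β ^ 2)
    refine this.congr_deriv (Eq.symm ?_); ring
  have hs' : ∀ x, HasDerivAt s ((2 * x - 1) / (2 * s x)) x := by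
    intro x
    have := (Real.hasDerivAt_sqrt (hq x).ne').comp x (hq' x)
    refine this.congr_deriv (Eq.symm ?_)
    field_simp
    rfl
  have hf' : ∀ x, HasDerivAt f ((-1 + (2 * x - 1) / (2 * s x)) / 2) x := fun x =>
    ((h1 x).add (hs' x)).div_const 2
  have hdf : deriv f = fun x => (-1 + (2 * x - 1) / (2 * s x)) / 2 :=
    funext fun x => (hf' x).deriv
  have hf'' : ∀ x, HasDerivAt (fun x => (-1 + (2 * x - 1) / (2 * s x)) / 2)
      (β ^ 2 / (2 * s x ^ 3)) x := by
    intro x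
    have hnum : HasDerivAt (fun x : ℝ => 2 * x - 1) 2 x := by
      simpa using ((hasDerivAt_id x).const_mul 2).sub_const 1
    have hden : HasDerivAt (fun x => 2 * s x) (2 * ((2 * x - 1) / (2 * s x))) x :=
      (hs' x).const_mul 2
    have h2 : (2 : ℝ) * s x ≠ 0 := by positivity
    have := ((hnum.div hden h2).const_add (-1)).div_const 2
    refine this.congr_deriv (Eq.symm ?_)
    field_simp
    rw [hs2' x]; ring
  have hdf2 : deriv (deriv f) = fun x => β ^ 2 / (2 * s x ^ 3) := by
    rw [hdf]; exact funext fun x => (hf'' x).deriv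
  have hf''' : ∀ x, HasDerivAt (fun x => β ^ 2 / (2 * s x ^ 3))
      (-3 * β ^ 2 * (2 * x - 1) / (4 * s x ^ 5)) x := by
    intro x
    have hden : HasDerivAt (fun x => 2 * s x ^ 3)
        (2 * ((3 : ℕ) * s x ^ 2 * ((2 * x - 1) / (2 * s x)))) x := by
      simpa using ((hs' x).pow 3).const_mul 2
    have h2 : (2 : ℝ) * s x ^ 3 ≠ 0 := by positivity
    have := (hasDerivAt_const x (β ^ 2)).div hden h2
    refine this.congr_deriv (Eq.symm ?_)
    field_simp
    ring
  have hdf3 : ∀ x, deriv (deriv (deriv f)) x = -3 * β ^ 2 * (2 * x - 1) / (4 * s x ^ 5) := by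
    intro x
    rw [hdf2]
    exact (hf''' x).deriv
  have hscd : ContDiff ℝ 2 s := by
    rw [contDiff_iff_contDiffAt]
    intro x
    exact (Real.contDiffAt_sqrt (hq x).ne').comp x
      (((contDiff_const.sub contDiff_id).pow 2).add contDiff_const).contDiffAt
  constructor
  · rw [hdf]
    exact ((contDiff_const.add (((contDiff_const.mul contDiff_id).sub contDiff_const).div
      (contDiff_const.mul hscd) (fun x => by positivity))).div_const 2)
  · intro x
    rw [hdf3 x]
    have habs0 : |1 / 2 - x| ≤ s x := by
      rw [← Real.sqrt_sq_eq_abs]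
      exact Real.sqrt_le_sqrt (by
        have hqe : q x = (1 / 2 - x) ^ 2 + β ^ 2 := rfl
        rw [hqe]; nlinarith [sq_nonneg β] : (1 / 2 - x) ^ 2 ≤ q x)
    have habs : |2 * x - 1| ≤ 2 * s x := by
      have he : (2 * x - 1 : ℝ) = -2 * (1 / 2 - x) := by ring
      rw [he, abs_mul]
      rw [show |(-2 : ℝ)| = 2 by norm_num]
      linarith [abs_nonneg (1 / 2 - x)]
    have hsb : β ≤ s x := by
      have := Real.sqrt_le_sqrt (show β ^ 2 ≤ q x by
        have hqe : q x = (1 / 2 - x) ^ 2 + β ^ 2 := rfl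
        rw [hqe]; nlinarith [sq_nonneg (1 / 2 - x)])
      rwa [Real.sqrt_sq hβ.le] at this
    have h1 : |(-3 : ℝ) * β ^ 2 * (2 * x - 1) / (4 * s x ^ 5)| =
        3 * β ^ 2 * |2 * x - 1| / (4 * s x ^ 5) := by
      rw [abs_div, abs_mul, abs_mul]
      rw [abs_of_pos (show (0:ℝ) < 4 * s x ^ 5 by positivity)]
      rw [abs_of_pos (show (0:ℝ) < β ^ 2 by positivity)]
      norm_num
    rw [h1]
    have hb4 : β ^ 4 ≤ s x ^ 4 := pow_le_pow_left₀ hβ.le hsb 4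
    rw [div_le_div_iff₀ (by positivity) (by positivity)]
    nlinarith [mul_le_mul hb4 habs (abs_nonneg _) (by positivity : (0:ℝ) ≤ s x ^ 4),
      pow_pos (hs x) 5]
end

section
/- Let f : [−1, 1] → [−1, 1] be a convex 1-Lipschitz function, let a be the right derivative of f at −1 and b the left derivative of f at 1 (which exist since f is convex and Lipschitz). Then there exist a probability measure μ on ℝ supported in [−1, 1] and a constant c ∈ ℝ such that for all θ ∈ [−1, 1], f(θ) = ((b − a)/2) · ∫ |θ − s| dμ(s) + ((a + b)/2) · θ + c. In other words, every 1-Lipschitz convex function on [−1,1] is, up to an additive constant, a nonnegative combination of an average of absolute-value (hinge-type) functions and a linear function. -/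
open MeasureTheory Set Filter Topology

namespace HingeAux

/-- The (extended) right-derivative function of `f`. -/
noncomputable def g (f : ℝ → ℝ) (a b : ℝ) : ℝ → ℝ := fun x =>
  if x < -1 then a else if x < 1 then sInf (slope f x '' Set.Ioo x 1) else b

variable {f : ℝ → ℝ} {a b : ℝ}

lemma cont (hlip : ∀ x ∈ Icc (-1:ℝ) 1, ∀ y ∈ Icc (-1:ℝ) 1, |f x - f y| ≤ |x - y|) :
    ContinuousOn f (Icc (-1:ℝ) 1) := by
  have h : LipschitzOnWith 1 f (Icc (-1:ℝ) 1) := by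
    rw [lipschitzOnWith_iff_dist_le_mul]
    intro x hx y hy
    simpa [Real.dist_eq] using hlip x hx y hy
  exact h.continuousOn

lemma slope_lb (hconv : ConvexOn ℝ (Icc (-1:ℝ) 1) f)
    (ha : HasDerivWithinAt f a (Ici (-1:ℝ)) (-1)) :
    ∀ x ∈ Icc (-1:ℝ) 1, ∀ y ∈ Icc (-1:ℝ) 1, x < y → a ≤ slope f x y := by
  intro x hx y hy hxy
  have hm1 : (-1:ℝ) ∈ Icc (-1:ℝ) 1 := by constructor <;> norm_num
  rcases eq_or_lt_of_le hx.1 with h | h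
  · exact hconv.le_slope_of_hasDerivWithinAt_Ioi (h ▸ hm1) hy (h ▸ hxy)
      (h ▸ ha.mono Ioi_subset_Ici_self)
  · calc a ≤ slope f (-1) x :=
        hconv.le_slope_of_hasDerivWithinAt_Ioi hm1 hx h (ha.mono Ioi_subset_Ici_self)
    _ ≤ slope f x y := by
        rw [slope_def_field, slope_def_field]
        exact hconv.slope_mono_adjacent hm1 hy h hxy


lemma slope_ub (hconv : ConvexOn ℝ (Icc (-1:ℝ) 1) f)
    (hb : HasDerivWithinAt f b (Iic (1:ℝ)) 1) :
    ∀ x ∈ Icc (-1:ℝ) 1, ∀ y ∈ Icc (-1:ℝ) 1, x < y → slope f x y ≤ b := by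
  intro x hx y hy hxy
  have h1 : (1:ℝ) ∈ Icc (-1:ℝ) 1 := by constructor <;> norm_num
  rcases eq_or_lt_of_le hy.2 with h | h
  · exact hconv.slope_le_of_hasDerivWithinAt_Iio hx (h ▸ h1) (h ▸ hxy)
      (h ▸ hb.mono Iio_subset_Iic_self)
  · have step1 : slope f x y ≤ slope f y 1 := by
      rw [slope_def_field, slope_def_field]
      exact hconv.slope_mono_adjacent hx h1 hxy h
    exact step1.trans (hconv.slope_le_of_hasDerivWithinAt_Iio hy h1 h
      (hb.mono Iio_subset_Iic_self))

section gLemmas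

variable (hconv : ConvexOn ℝ (Icc (-1:ℝ) 1) f)
variable (hlip : ∀ x ∈ Icc (-1:ℝ) 1, ∀ y ∈ Icc (-1:ℝ) 1, |f x - f y| ≤ |x - y|)
variable (ha : HasDerivWithinAt f a (Ici (-1:ℝ)) (-1))
variable (hb : HasDerivWithinAt f b (Iic (1:ℝ)) 1)

lemma g_eq_sInf {x : ℝ} (hx : x ∈ Ico (-1:ℝ) 1) :
    g f a b x = sInf (slope f x '' Set.Ioo x 1) := by
  simp [g, not_lt.2 hx.1, hx.2]

lemma ioo_nonempty {x : ℝ} (hx : x < 1) : (Ioo x 1).Nonempty :=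
  ⟨(x+1)/2, by constructor <;> linarith⟩

include hconv ha in
lemma bdd_lb {x : ℝ} (hx : x ∈ Ico (-1:ℝ) 1) :
    a ∈ lowerBounds (slope f x '' Set.Ioo x 1) := by
  rintro r ⟨y, hy, rfl⟩
  exact slope_lb hconv ha x ⟨hx.1, hx.2.le⟩ y ⟨by linarith [hy.1, hx.1], hy.2.le⟩ hy.1

include hconv ha in
lemma g_le_slope {x y : ℝ} (hx : x ∈ Ico (-1:ℝ) 1) (hy : y ∈ Ioo x 1) :
    g f a b x ≤ slope f x y := by
  rw [g_eq_sInf hx]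
  exact csInf_le ⟨a, bdd_lb hconv ha hx⟩ (mem_image_of_mem _ hy)

include hconv ha in
lemma a_le_g_Ico {x : ℝ} (hx : x ∈ Ico (-1:ℝ) 1) : a ≤ g f a b x := by
  rw [g_eq_sInf hx]
  exact le_csInf ((ioo_nonempty hx.2).image _) (fun r hr => bdd_lb hconv ha hx hr)

include hconv ha hb in
lemma g_le_b_Ico {x : ℝ} (hx : x ∈ Ico (-1:ℝ) 1) : g f a b x ≤ b := by
  have hy : (x+1)/2 ∈ Ioo x 1 := by constructor <;> linarith [hx.1, hx.2]
  refine (g_le_slope hconv ha hx hy).trans ?_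
  exact slope_ub hconv hb x ⟨hx.1, hx.2.le⟩ _ ⟨by linarith [hx.1, hy.1], hy.2.le⟩ hy.1

include hconv ha hb in
lemma hab : a ≤ b := by
  have h := slope_lb hconv ha (-1) (by constructor <;> norm_num) 1 (by constructor <;> norm_num)
    (by norm_num)
  have h2 := slope_ub hconv hb (-1) (by constructor <;> norm_num) 1 (by constructor <;> norm_num)
    (by norm_num)
  linarith

include hconv ha hb in
lemma a_le_g (x : ℝ) : a ≤ g f a b x := by
  by_cases h1 : x < -1
  · simp [g, h1]
  by_cases h2 : x < 1
  · exact a_le_g_Ico hconv ha ⟨not_lt.1 h1, h2⟩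
  · simpa [g, h1, h2] using hab hconv ha hb

include hconv ha hb in
lemma g_le_b' (x : ℝ) : g f a b x ≤ b := by
  by_cases h1 : x < -1
  · simpa [g, h1] using hab hconv ha hb
  by_cases h2 : x < 1
  · exact g_le_b_Ico hconv ha hb ⟨not_lt.1 h1, h2⟩
  · simp [g, h1, h2]

include hconv ha hb in
lemma gmono : Monotone (g f a b) := by
  intro u v huv
  by_cases hu1 : u < -1
  · rw [show g f a b u = a from if_pos hu1]
    exact a_le_g hconv ha hb v
  by_cases hu2 : u < 1
  swap
  · have hv2 : ¬ v < 1 := not_lt.2 ((not_lt.1 hu2).trans huv)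
    have hv1 : ¬ v < -1 := fun h => by linarith [not_lt.1 hu2]
    simp [g, hu1, hu2, hv1, hv2]
  · by_cases hv2 : v < 1
    · have hv1 : ¬ v < -1 := fun h => by linarith [not_lt.1 hu1]
      rcases eq_or_lt_of_le huv with rfl | huv'
      · exact le_refl _
      rw [g_eq_sInf (x := v) ⟨not_lt.1 hv1, hv2⟩]
      apply le_csInf ((ioo_nonempty hv2).image _)
      rintro r ⟨y, hy, rfl⟩
      have h1 : g f a b u ≤ slope f u v :=
        g_le_slope hconv ha ⟨not_lt.1 hu1, hu2⟩ ⟨huv', hv2⟩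
      refine h1.trans ?_
      rw [slope_def_field, slope_def_field]
      exact hconv.slope_mono_adjacent ⟨not_lt.1 hu1, hu2.le⟩
        ⟨by linarith [not_lt.1 hv1, hy.1], hy.2.le⟩ huv' hy.1
    · have hv1 : ¬ v < -1 := by linarith [not_lt.1 hv2]
      calc g f a b u ≤ b := g_le_b' hconv ha hb u
      _ = g f a b v := by simp [g, hv1, hv2]

include hconv ha hb in
lemma gderiv {x : ℝ} (hx : x ∈ Ico (-1:ℝ) 1) :
    HasDerivWithinAt f (g f a b x) (Ioi x) x := by
  rw [g_eq_sInf hx]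
  rw [hasDerivWithinAt_iff_tendsto_slope' (notMem_Ioi_self)]
  have Mf : MonotoneOn (slope f x) (Ioo x 1) := by
    intro y hy z hz hyz
    rw [slope_def_field, slope_def_field]
    exact hconv.secant_mono ⟨hx.1, hx.2.le⟩ ⟨by linarith [hy.1, hx.1], hy.2.le⟩
      ⟨by linarith [hz.1, hx.1], hz.2.le⟩ (ne_of_gt hy.1) (ne_of_gt hz.1) hyz
  exact MonotoneOn.tendsto_nhdsWithin_Ioo_right (ioo_nonempty hx.2) Mf
    ⟨a, bdd_lb hconv ha hx⟩

include hconv ha hb in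
lemma g_eq_a {x : ℝ} (hx : x ≤ -1) : g f a b x = a := by
  rcases lt_or_eq_of_le hx with h | h
  · simp [g, h]
  subst h
  have h1 := gderiv hconv ha hb (x := -1) ⟨le_refl _, by norm_num⟩
  have h2 : HasDerivWithinAt f a (Ioi (-1:ℝ)) (-1) := ha.mono Ioi_subset_Ici_self
  rw [hasDerivWithinAt_iff_tendsto_slope' (notMem_Ioi_self)] at h1 h2
  exact tendsto_nhds_unique h1 h2

lemma g_eq_b {x : ℝ} (hx : (1:ℝ) ≤ x) : g f a b x = b := by
  have h1 : ¬ x < -1 := by linarith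
  simp [g, not_lt.2 hx, h1]

include hconv ha hb hlip in
lemma grc (x : ℝ) : ContinuousWithinAt (g f a b) (Ici x) x := by
  by_cases hx1 : x < -1
  · have hmem : Iio (-1:ℝ) ∈ 𝓝 x := Iio_mem_nhds hx1
    have : ∀ᶠ y in 𝓝[Ici x] x, g f a b y = a := by
      filter_upwards [mem_nhdsWithin_of_mem_nhds hmem] with y hy
      exact g_eq_a hconv ha hb (le_of_lt hy)
    exact (continuousWithinAt_const (b := a)).congr_of_eventuallyEq this
      (g_eq_a hconv ha hb hx1.le)
  by_cases hx2 : x < 1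
  swap
  · exact (continuousWithinAt_const (b := b)).congr
      (fun y hy => g_eq_b (le_trans (not_lt.1 hx2) hy)) (g_eq_b (not_lt.1 hx2))
  · have hx : x ∈ Ico (-1:ℝ) 1 := ⟨not_lt.1 hx1, hx2⟩
    rw [← continuousWithinAt_Ioi_iff_Ici]
    have hbdd : BddBelow (g f a b '' Ioi x) :=
      ⟨a, by rintro r ⟨z, hz, rfl⟩; exact a_le_g hconv ha hb z⟩
    have key : sInf (g f a b '' Ioi x) = g f a b x := by
      apply le_antisymm
      · rw [g_eq_sInf hx]
        apply le_csInf ((ioo_nonempty hx2).image _)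
        rintro r ⟨y, hy, rfl⟩
        have ev : ∀ᶠ x' in 𝓝[>] x, sInf (g f a b '' Ioi x) ≤ slope f x' y := by
          filter_upwards [Ioo_mem_nhdsGT_of_mem ⟨le_refl x, hy.1⟩] with x' hx'
          calc sInf (g f a b '' Ioi x) ≤ g f a b x' :=
                csInf_le hbdd (mem_image_of_mem _ hx'.1)
          _ ≤ slope f x' y := g_le_slope hconv ha
              ⟨by linarith [hx.1, hx'.1], by linarith [hx'.2, hy.2]⟩ ⟨hx'.2, hy.2⟩
        have hfx : Tendsto f (𝓝[>] x) (𝓝 (f x)) := by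
          have hc : ContinuousWithinAt f (Icc (-1:ℝ) 1) x := cont hlip x ⟨hx.1, hx.2.le⟩
          refine hc.tendsto.mono_left (nhdsWithin_le_iff.2 ?_)
          exact mem_of_superset (Ioo_mem_nhdsGT_of_mem ⟨le_refl x, hx.2⟩)
            (fun z hz => ⟨by linarith [hx.1, hz.1], hz.2.le⟩)
        have hid : Tendsto (fun x' : ℝ => x') (𝓝[>] x) (𝓝 x) :=
          tendsto_id.mono_left nhdsWithin_le_nhds
        have lim : Tendsto (fun x' => slope f x' y) (𝓝[>] x) (𝓝 (slope f x y)) := by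
          simp only [slope_def_field]
          exact (tendsto_const_nhds.sub hfx).div (tendsto_const_nhds.sub hid)
            (sub_ne_zero.2 (ne_of_gt hy.1))
        exact ge_of_tendsto lim ev
      · apply le_csInf (((nonempty_Ioi (a := x)).image _))
        rintro r ⟨z, hz, rfl⟩
        exact gmono hconv ha hb (le_of_lt hz)
    have := (gmono hconv ha hb).tendsto_nhdsGT x
    rw [key] at this
    exact this

include hconv ha hb in
lemma gbot : Tendsto (g f a b) atBot (𝓝 a) := by
  apply Tendsto.congr' _ (tendsto_const_nhds (x := a))
  filter_upwards [eventually_le_atBot (-1:ℝ)] with x hx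
  exact (g_eq_a hconv ha hb hx).symm

lemma gtop : Tendsto (g f a b) atTop (𝓝 b) := by
  apply Tendsto.congr' _ (tendsto_const_nhds (x := b))
  filter_upwards [eventually_ge_atTop (1:ℝ)] with x hx
  exact (g_eq_b hx).symm

end gLemmas

end HingeAux

open HingeAux in
/-- Every 1-Lipschitz convex function `f : [−1,1] → [−1,1]`, with right
derivative `a` at `−1` and left derivative `b` at `1`, can be written (up to an
additive constant) as a nonnegative combination of an average of absolute-value
functions with respect to a probability measure supported in `[−1,1]` and a
linear function. -/
theorem convex_lipschitz_hinge_representation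
    (f : ℝ → ℝ)
    (hconv : ConvexOn ℝ (Set.Icc (-1 : ℝ) 1) f)
    (hlip : ∀ x ∈ Set.Icc (-1 : ℝ) 1, ∀ y ∈ Set.Icc (-1 : ℝ) 1, |f x - f y| ≤ |x - y|)
    (hrange : ∀ x ∈ Set.Icc (-1 : ℝ) 1, f x ∈ Set.Icc (-1 : ℝ) 1)
    (a b : ℝ)
    (ha : HasDerivWithinAt f a (Set.Ici (-1 : ℝ)) (-1))
    (hb : HasDerivWithinAt f b (Set.Iic (1 : ℝ)) 1) :
    ∃ (μ : Measure ℝ) (_ : IsProbabilityMeasure μ) (c : ℝ),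
      μ (Set.Icc (-1 : ℝ) 1)ᶜ = 0 ∧
      ∀ θ ∈ Set.Icc (-1 : ℝ) 1,
        f θ = (b - a) / 2 * (∫ s, |θ - s| ∂μ) + (a + b) / 2 * θ + c := by
  classical
  have hab' : a ≤ b := hab hconv ha hb
  by_cases hlt : a < b
  swap
  · -- degenerate affine case
    have hba : b = a := le_antisymm (not_lt.1 hlt) hab'
    refine ⟨Measure.dirac 0, inferInstance, f (-1) + a, ?_, ?_⟩
    · rw [Measure.dirac_apply' _ measurableSet_Icc.compl]
      simp
    · intro θ hθ
      have hfθ : f θ = f (-1) + a * (θ + 1) := by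
        rcases eq_or_lt_of_le hθ.1 with h | h
        · rw [← h]; ring
        · have h1 := slope_lb hconv ha (-1) (by constructor <;> norm_num) θ hθ h
          have h2 := slope_ub hconv hb (-1) (by constructor <;> norm_num) θ hθ h
          rw [hba] at h2
          have heq : slope f (-1) θ = a := le_antisymm h2 h1
          rw [slope_def_field] at heq
          have := (div_eq_iff (by linarith : θ - (-1) ≠ 0)).1 heq
          linarith
      rw [hfθ, hba]; ring
  · -- main case
    have hβ : (0:ℝ) < b - a := by linarith
    set G : StieltjesFunction ℝ := ⟨g f a b, gmono hconv ha hb, grc hconv hlip ha hb⟩ with hGdef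
    set ν := G.measure with hνdef
    have hbot : Filter.Tendsto G Filter.atBot (nhds a) := gbot hconv ha hb
    have htop : Filter.Tendsto G Filter.atTop (nhds b) := gtop
    haveI : IsFiniteMeasure ν := G.isFiniteMeasure hbot htop
    have hIic : ∀ x, ν (Set.Iic x) = ENNReal.ofReal (g f a b x - a) := G.measure_Iic hbot
    have huniv : ν Set.univ = ENNReal.ofReal (b - a) := G.measure_univ hbot htop
    have hcompl : ν (Set.Icc (-1:ℝ) 1)ᶜ = 0 := by
      have h1 : ν (Set.Iio (-1:ℝ)) = 0 := by
        apply measure_mono_null Set.Iio_subset_Iic_self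
        rw [hIic, g_eq_a hconv ha hb le_rfl]
        simp
      have h2 : ν (Set.Ioi (1:ℝ)) = 0 := by
        have hc : Set.Ioi (1:ℝ) = (Set.Iic 1)ᶜ := (Set.compl_Iic).symm
        rw [hc, measure_compl measurableSet_Iic (measure_ne_top _ _), hIic,
          g_eq_b le_rfl, huniv]
        simp
      have hsplit : (Set.Icc (-1:ℝ) 1)ᶜ = Set.Iio (-1) ∪ Set.Ioi 1 := by
        ext x
        simp only [Set.mem_compl_iff, Set.mem_Icc, not_and_or, not_le, Set.mem_union,
          Set.mem_Iio, Set.mem_Ioi]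
      rw [hsplit]
      exact le_antisymm ((measure_union_le _ _).trans (by simp [h1, h2])) (by positivity)
    set c0 : ENNReal := ENNReal.ofReal (b - a) with hc0def
    have hc0 : c0 ≠ 0 := by simp [hc0def, ENNReal.ofReal_eq_zero]; linarith
    have hc0' : c0 ≠ ⊤ := ENNReal.ofReal_ne_top
    set μ : Measure ℝ := c0⁻¹ • ν with hμdef
    have hνμ : ν = c0 • μ := by
      rw [hμdef, smul_smul, ENNReal.mul_inv_cancel hc0 hc0', one_smul]
    have hprob : IsProbabilityMeasure μ := by
      constructor
      rw [hμdef, Measure.smul_apply, huniv, smul_eq_mul,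
        ENNReal.inv_mul_cancel hc0 hc0']
    have hμcompl : μ (Set.Icc (-1:ℝ) 1)ᶜ = 0 := by
      rw [hμdef, Measure.smul_apply, hcompl]
      simp
    refine ⟨μ, hprob, f (-1) + a - (b - a)/2 * ∫ s, s ∂μ, hμcompl, ?_⟩
    intro θ hθ
    have haeμ : ∀ᵐ s ∂μ, s ∈ Set.Icc (-1:ℝ) 1 := by
      rw [MeasureTheory.ae_iff]
      exact measure_mono_null (fun s hs => by simpa using hs) hμcompl
    have haeν : ∀ᵐ s ∂ν, s ∈ Set.Icc (-1:ℝ) 1 := by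
      rw [MeasureTheory.ae_iff]
      exact measure_mono_null (fun s hs => by simpa using hs) hcompl
    haveI := hprob
    -- integrability helper
    have intble : ∀ (m : Measure ℝ), IsFiniteMeasure m → (∀ᵐ s ∂m, s ∈ Set.Icc (-1:ℝ) 1) →
        ∀ (φ : ℝ → ℝ), Continuous φ → (∀ s ∈ Set.Icc (-1:ℝ) 1, |φ s| ≤ 3) →
        Integrable φ m := by
      intro m hfin hm φ hφ hbd
      haveI := hfin
      apply Integrable.mono' (integrable_const (3:ℝ)) hφ.aestronglyMeasurable
      filter_upwards [hm] with s hs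
      rw [Real.norm_eq_abs]
      exact hbd s hs
    have hθabs : |θ| ≤ 1 := abs_le.2 ⟨hθ.1, hθ.2⟩
    have int_abs_μ : Integrable (fun s => |θ - s|) μ := by
      refine intble μ inferInstance haeμ _ (continuous_const.sub continuous_id).abs ?_
      intro s hs
      have : |θ - s| ≤ |θ| + |s| := abs_sub _ _
      have hs' : |s| ≤ 1 := abs_le.2 ⟨hs.1, hs.2⟩
      rw [abs_abs]
      linarith
    have int_id_μ : Integrable (fun s : ℝ => s) μ := by
      refine intble μ inferInstance haeμ _ continuous_id ?_
      intro s hs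
      have hs' : |s| ≤ 1 := abs_le.2 ⟨hs.1, hs.2⟩
      linarith
    have int_max_ν : Integrable (fun s => max (θ - s) 0) ν := by
      refine intble ν inferInstance haeν _ ((continuous_const.sub continuous_id).max
        continuous_const) ?_
      intro s hs
      have hs' : |s| ≤ 1 := abs_le.2 ⟨hs.1, hs.2⟩
      rw [abs_le]
      constructor
      · linarith [le_max_right (θ - s) (0:ℝ)]
      · rw [max_le_iff]
        constructor <;> [skip; linarith]
        have : |θ - s| ≤ |θ| + |s| := abs_sub _ _
        have := le_abs_self (θ - s)
        linarith
    -- FTC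
    have hθ1 : (-1:ℝ) ≤ θ := hθ.1
    have hFTC : ∫ x in (-1:ℝ)..θ, g f a b x = f θ - f (-1) := by
      apply intervalIntegral.integral_eq_sub_of_hasDeriv_right_of_le hθ1
      · exact (cont hlip).mono (Set.Icc_subset_Icc le_rfl hθ.2)
      · intro x hx
        exact gderiv hconv ha hb ⟨by linarith [hx.1], by linarith [hx.2, hθ.2]⟩
      · exact (gmono hconv ha hb).intervalIntegrable
    have hgax : ∀ x, g f a b x = a + (ν (Set.Iic x)).toReal := by
      intro x
      rw [hIic, ENNReal.toReal_ofReal (by linarith [a_le_g hconv ha hb x] : 0 ≤ g f a b x - a)]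
      ring
    have hintν : IntervalIntegrable (fun x => (ν (Set.Iic x)).toReal) volume (-1) θ := by
      have heq : (fun x => (ν (Set.Iic x)).toReal) = fun x => g f a b x - a :=
        funext fun x => by rw [hgax x]; ring
      rw [heq]
      exact ((gmono hconv ha hb).intervalIntegrable).sub intervalIntegrable_const
    have hsplit : ∫ x in (-1:ℝ)..θ, g f a b x
        = a * (θ + 1) + ∫ x in (-1:ℝ)..θ, (ν (Set.Iic x)).toReal := by
      calc ∫ x in (-1:ℝ)..θ, g f a b x
          = ∫ x in (-1:ℝ)..θ, (a + (ν (Set.Iic x)).toReal) :=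
            intervalIntegral.integral_congr (fun x _ => hgax x)
      _ = (∫ _x in (-1:ℝ)..θ, a) + ∫ x in (-1:ℝ)..θ, (ν (Set.Iic x)).toReal :=
            intervalIntegral.integral_add intervalIntegrable_const hintν
      _ = a * (θ + 1) + ∫ x in (-1:ℝ)..θ, (ν (Set.Iic x)).toReal := by
            rw [intervalIntegral.integral_const]
            congr 1
            simp [smul_eq_mul]
            ring
    -- layer cake
    have hlayer : ∫ s, max (θ - s) 0 ∂ν = ∫ x in (-1:ℝ)..θ, (ν (Set.Iic x)).toReal := by
      rw [int_max_ν.integral_eq_integral_Ioc_meas_le (M := θ + 1)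
        (Filter.Eventually.of_forall fun s => le_max_right _ _) ?_]
      · have hset : ∀ t ∈ Set.Ioc (0:ℝ) (θ+1),
            (ν {s | t ≤ max (θ - s) 0}).toReal = (ν (Set.Iic (θ - t))).toReal := by
          intro t ht
          congr 2
          ext s
          simp only [Set.mem_setOf_eq, Set.mem_Iic, le_max_iff]
          constructor
          · rintro (h | h)
            · linarith
            · linarith [ht.1]
          · intro h
            left
            linarith
        simp only [measureReal_def]
        rw [setIntegral_congr_fun measurableSet_Ioc hset,
          ← intervalIntegral.integral_of_le (by linarith : (0:ℝ) ≤ θ+1),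
          intervalIntegral.integral_comp_sub_left (fun x => (ν (Set.Iic x)).toReal) θ]
        have e1 : θ - (θ + 1) = -1 := by ring
        have e2 : θ - 0 = θ := by ring
        rw [e1, e2]
      · filter_upwards [haeν] with s hs
        rw [max_le_iff]
        constructor <;> linarith [hs.1]
    -- pass from ν to μ
    have hsm : ∀ φ : ℝ → ℝ, ∫ s, φ s ∂ν = (b - a) * ∫ s, φ s ∂μ := by
      intro φ
      rw [hνμ, integral_smul_measure, hc0def, ENNReal.toReal_ofReal hβ.le, smul_eq_mul]
    -- split max into abs and linear parts
    have hmaxpt : ∀ s : ℝ, max (θ - s) 0 = (|θ - s| + (θ - s))/2 := by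
      intro s
      rcases le_total (θ - s) 0 with h | h
      · rw [max_eq_right h, abs_of_nonpos h]; ring
      · rw [max_eq_left h, abs_of_nonneg h]; ring
    have int_lin_μ : Integrable (fun s : ℝ => θ - s) μ := (integrable_const θ).sub int_id_μ
    have hmaxint : ∫ s, max (θ - s) 0 ∂μ
        = ((∫ s, |θ - s| ∂μ) + (θ - ∫ s, s ∂μ))/2 := by
      simp_rw [hmaxpt]
      rw [integral_div, integral_add int_abs_μ int_lin_μ,
        integral_sub (integrable_const θ) int_id_μ, integral_const]
      simp [measure_univ]
    -- assemble
    have E1 : f θ - f (-1) = a * (θ + 1) + ∫ x in (-1:ℝ)..θ, (ν (Set.Iic x)).toReal := by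
      rw [← hFTC, hsplit]
    have E3 : ∫ x in (-1:ℝ)..θ, (ν (Set.Iic x)).toReal
        = (b - a) * (((∫ s, |θ - s| ∂μ) + (θ - ∫ s, s ∂μ))/2) := by
      rw [← hlayer, hsm, hmaxint]
    linear_combination E1 + E3
end

section
/- Let T > 0 and let f : ℝ → ℝ be twice continuously differentiable on [0, 1] with |f″(x)| ≤ T for all x ∈ [0, 1]. Then for every positive integer k and every y ∈ [0, 1], the Bernstein polynomial of f of degree k satisfies |B_k(f; y) − f(y)| ≤ T/(8k). -/
open Set

/-- One-sided Taylor bound: if `f'` is `T`-Lipschitz on `[0,1]` then the first-order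
Taylor remainder is bounded by `T/2 (x-y)^2`, for `y ≤ x`. -/
lemma taylor1_half {T : ℝ} (f g : ℝ → ℝ)
    (hg : ∀ t ∈ Icc (0:ℝ) 1, HasDerivWithinAt f (g t) (Icc (0:ℝ) 1) t)
    (hlip : ∀ a ∈ Icc (0:ℝ) 1, ∀ b ∈ Icc (0:ℝ) 1, |g a - g b| ≤ T * |a - b|)
    {x y : ℝ} (hx : x ∈ Icc (0:ℝ) 1) (hy : y ∈ Icc (0:ℝ) 1) (hxy : y ≤ x) :
    |f x - f y - g y * (x - y)| ≤ T / 2 * (x - y) ^ 2 := by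
  have hcont : ContinuousOn f (Icc (0:ℝ) 1) := fun t ht => (hg t ht).continuousWithinAt
  have hsub : Icc y x ⊆ Icc (0:ℝ) 1 := Icc_subset_Icc hy.1 hx.2
  have main : ∀ ⦃t⦄, t ∈ Icc y x →
      ‖f t - f y - g y * (t - y)‖ ≤ T / 2 * (t - y) ^ 2 := by
    refine image_norm_le_of_norm_deriv_right_le_deriv_boundary
      (f' := fun t => g t - g y) (B' := fun t => T * (t - y)) ?_ ?_ ?_ ?_ ?_
    · exact ((hcont.mono hsub).sub continuousOn_const).sub (by fun_prop)
    · intro t ht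
      have hmem : Icc (0:ℝ) 1 ∈ nhdsWithin t (Ici t) := by
        filter_upwards [self_mem_nhdsWithin,
          mem_nhdsWithin_of_mem_nhds (Iio_mem_nhds ht.2)] with s hs1 hs2
        exact ⟨le_trans hy.1 (le_trans ht.1 hs1), le_trans hs2.le hx.2⟩
      have h1 : HasDerivWithinAt f (g t) (Ici t) t :=
        (hg t (hsub ⟨ht.1, ht.2.le⟩)).mono_of_mem_nhdsWithin hmem
      have h2 : HasDerivWithinAt (fun s : ℝ => f y + g y * (s - y)) (g y) (Ici t) t := by
        simpa using (((hasDerivWithinAt_id t (Ici t)).sub_const y).const_mul (g y)).const_add (f y)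
      simpa [sub_sub, Pi.sub_def] using h1.sub h2
    · simp
    · intro t
      have h : HasDerivAt (fun s : ℝ => T / 2 * (s - y) ^ 2)
          (T / 2 * (((2:ℕ):ℝ) * (t - y) ^ (2 - 1) * 1)) t :=
        (((hasDerivAt_id t).sub_const y).pow 2).const_mul (T / 2)
      convert h using 1
      push_cast
      ring
    · intro t ht
      have h1 := hlip t (hsub ⟨ht.1, ht.2.le⟩) y hy
      rw [abs_of_nonneg (sub_nonneg.2 ht.1)] at h1
      simpa using h1
  simpa [Real.norm_eq_abs] using main (right_mem_Icc.2 hxy)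

/-- Two-sided version of `taylor1_half`, by reflection. -/
lemma taylor1 {T : ℝ} (f g : ℝ → ℝ)
    (hg : ∀ t ∈ Icc (0:ℝ) 1, HasDerivWithinAt f (g t) (Icc (0:ℝ) 1) t)
    (hlip : ∀ a ∈ Icc (0:ℝ) 1, ∀ b ∈ Icc (0:ℝ) 1, |g a - g b| ≤ T * |a - b|)
    {x y : ℝ} (hx : x ∈ Icc (0:ℝ) 1) (hy : y ∈ Icc (0:ℝ) 1) :
    |f x - f y - g y * (x - y)| ≤ T / 2 * (x - y) ^ 2 := by
  rcases le_total y x with h | h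
  · exact taylor1_half f g hg hlip hx hy h
  · have refl_mem : ∀ {t : ℝ}, t ∈ Icc (0:ℝ) 1 → 1 - t ∈ Icc (0:ℝ) 1 := by
      rintro t ⟨h1, h2⟩; exact ⟨by linarith, by linarith⟩
    have hG : ∀ t ∈ Icc (0:ℝ) 1,
        HasDerivWithinAt (fun s => f (1 - s)) ((fun s => -g (1 - s)) t) (Icc (0:ℝ) 1) t := by
      intro t ht
      have inner : HasDerivWithinAt (fun s : ℝ => 1 - s) (-1) (Icc (0:ℝ) 1) t :=
        (hasDerivWithinAt_id t _).const_sub 1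
      have := (hg (1 - t) (refl_mem ht)).comp t inner (fun s hs => refl_mem hs)
      simpa [mul_comm, Function.comp_def] using this
    have hGlip : ∀ a ∈ Icc (0:ℝ) 1, ∀ b ∈ Icc (0:ℝ) 1,
        |(fun s => -g (1 - s)) a - (fun s => -g (1 - s)) b| ≤ T * |a - b| := by
      intro a ha b hb
      simp only
      rw [show -g (1 - a) - -g (1 - b) = g (1 - b) - g (1 - a) by ring,
        show |a - b| = |1 - b - (1 - a)| by rw [show (1:ℝ) - b - (1 - a) = a - b by ring]]
      exact hlip (1 - b) (refl_mem hb) (1 - a) (refl_mem ha)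
    have key := taylor1_half (fun s => f (1 - s)) (fun s => -g (1 - s)) hG hGlip
      (x := 1 - x) (y := 1 - y) (refl_mem hx) (refl_mem hy) (by linarith)
    have e2 : f (1 - (1 - x)) - f (1 - (1 - y)) - -g (1 - (1 - y)) * (1 - x - (1 - y))
        = f x - f y - g y * (x - y) := by norm_num; ring
    have e3 : (1 - x - (1 - y)) ^ 2 = (x - y) ^ 2 := by ring
    rw [e2, e3] at key
    exact key

/-- If `f : ℝ → ℝ` is twice continuously differentiable on `[0,1]` with second
derivative bounded by `T` there, then for every positive integer `k` and
`y ∈ [0,1]` the Bernstein polynomial of `f` of degree `k` satisfies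
`|B_k(f; y) − f(y)| ≤ T/(8k)`. -/
theorem bernstein_approx_of_C2 (T : ℝ) (hT : 0 < T) (f : ℝ → ℝ)
    (hf : ContDiffOn ℝ 2 f (Set.Icc (0 : ℝ) 1))
    (hf'' : ∀ x ∈ Set.Icc (0 : ℝ) 1,
      |iteratedDerivWithin 2 f (Set.Icc (0 : ℝ) 1) x| ≤ T)
    (k : ℕ) (hk : 0 < k) (y : ℝ) (hy : y ∈ Set.Icc (0 : ℝ) 1) :
    |(∑ v ∈ Finset.range (k + 1),
        f ((v : ℝ) / k) * (k.choose v : ℝ) * y ^ v * (1 - y) ^ (k - v)) - f y|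
      ≤ T / (8 * k) := by
  have hs : UniqueDiffOn ℝ (Icc (0:ℝ) 1) := uniqueDiffOn_Icc one_pos
  set g := derivWithin f (Icc (0:ℝ) 1) with hgdef
  have hdiff : DifferentiableOn ℝ f (Icc (0:ℝ) 1) := hf.differentiableOn (by norm_num)
  have hg : ∀ t ∈ Icc (0:ℝ) 1, HasDerivWithinAt f (g t) (Icc (0:ℝ) 1) t :=
    fun t ht => (hdiff t ht).hasDerivWithinAt
  have hgC1 : ContDiffOn ℝ 1 g (Icc (0:ℝ) 1) := hf.derivWithin hs (by norm_num)
  have hg2 : ∀ t ∈ Icc (0:ℝ) 1, derivWithin g (Icc (0:ℝ) 1) t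
      = iteratedDerivWithin 2 f (Icc (0:ℝ) 1) t := by
    intro t ht
    rw [iteratedDerivWithin_succ]
    refine (derivWithin_congr (fun s hsmem => ?_) ?_).symm
    · rw [iteratedDerivWithin_one]
    · rw [iteratedDerivWithin_one]
  have hlip : ∀ a ∈ Icc (0:ℝ) 1, ∀ b ∈ Icc (0:ℝ) 1, |g a - g b| ≤ T * |a - b| := by
    intro a ha b hb
    have := Convex.norm_image_sub_le_of_norm_derivWithin_le
      (hgC1.differentiableOn (by norm_num))
      (fun x hx => by rw [Real.norm_eq_abs, hg2 x hx]; exact hf'' x hx)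
      (convex_Icc 0 1) hb ha
    simpa [Real.norm_eq_abs] using this
  -- Bernstein basis
  set B : ℕ → ℝ := fun v => (k.choose v : ℝ) * y ^ v * (1 - y) ^ (k - v) with hBdef
  have hBnn : ∀ v, 0 ≤ B v := by
    intro v
    have h1 : (0:ℝ) ≤ y := hy.1
    have h2 : (0:ℝ) ≤ 1 - y := by linarith [hy.2]
    positivity
  have hBeval : ∀ v, (bernsteinPolynomial ℝ k v).eval y = B v := by
    intro v
    simp [bernsteinPolynomial, hBdef]
  have S0 : ∑ v ∈ Finset.range (k + 1), B v = 1 := by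
    have := congrArg (Polynomial.eval y) (bernsteinPolynomial.sum ℝ k)
    simpa [Polynomial.eval_finset_sum, hBeval] using this
  have S1 : ∑ v ∈ Finset.range (k + 1), (v : ℝ) * B v = k * y := by
    have := congrArg (Polynomial.eval y) (bernsteinPolynomial.sum_smul ℝ k)
    simpa [Polynomial.eval_finset_sum, hBeval, nsmul_eq_mul] using this
  have S2 : ∑ v ∈ Finset.range (k + 1), ((k : ℝ) * y - v) ^ 2 * B v = k * y * (1 - y) := by
    have := congrArg (Polynomial.eval y) (bernsteinPolynomial.variance ℝ k)
    simpa [Polynomial.eval_finset_sum, hBeval, nsmul_eq_mul] using this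
  have hkR : (0:ℝ) < k := by exact_mod_cast hk
  -- rewrite the sum
  have expand : (∑ v ∈ Finset.range (k + 1),
      f ((v : ℝ) / k) * (k.choose v : ℝ) * y ^ v * (1 - y) ^ (k - v)) - f y
      = ∑ v ∈ Finset.range (k + 1),
          (f ((v : ℝ) / k) - f y - g y * ((v : ℝ) / k - y)) * B v := by
    have hsplit : ∀ v : ℕ, (f ((v : ℝ) / k) - f y - g y * ((v : ℝ) / k - y)) * B v
        = f ((v : ℝ) / k) * B v - (f y - g y * y) * B v - (g y / k) * ((v:ℝ) * B v) := by
      intro v; field_simp; ring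
    rw [Finset.sum_congr rfl (fun v _ => hsplit v)]
    rw [Finset.sum_sub_distrib, Finset.sum_sub_distrib, ← Finset.mul_sum, ← Finset.mul_sum,
      S0, S1]
    have : ∀ v ∈ Finset.range (k+1),
        f ((v : ℝ) / k) * (k.choose v : ℝ) * y ^ v * (1 - y) ^ (k - v)
        = f ((v : ℝ) / k) * B v := by
      intro v _; rw [hBdef]; ring
    rw [Finset.sum_congr rfl this]
    field_simp
    ring
  rw [expand]
  have step1 : |∑ v ∈ Finset.range (k + 1),
      (f ((v : ℝ) / k) - f y - g y * ((v : ℝ) / k - y)) * B v|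
      ≤ ∑ v ∈ Finset.range (k + 1), (T / 2 * ((v:ℝ)/k - y)^2) * B v := by
    refine (Finset.abs_sum_le_sum_abs _ _).trans (Finset.sum_le_sum ?_)
    intro v hv
    rw [abs_mul, abs_of_nonneg (hBnn v)]
    refine mul_le_mul_of_nonneg_right ?_ (hBnn v)
    have hv' : v ≤ k := Nat.lt_succ_iff.mp (Finset.mem_range.mp hv)
    have hvk : (v:ℝ)/k ∈ Icc (0:ℝ) 1 := by
      constructor
      · positivity
      · rw [div_le_one hkR]; exact_mod_cast hv'
    exact taylor1 f g hg hlip hvk hy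
  refine step1.trans ?_
  have sum_eq : ∑ v ∈ Finset.range (k + 1), (T / 2 * ((v:ℝ)/k - y)^2) * B v
      = T / 2 * (y * (1 - y) / k) := by
    have h : ∀ v : ℕ, (T / 2 * ((v:ℝ)/k - y)^2) * B v
        = (T / (2 * k^2)) * (((k:ℝ) * y - v)^2 * B v) := by
      intro v; field_simp; ring
    rw [Finset.sum_congr rfl (fun v _ => h v), ← Finset.mul_sum, S2]
    field_simp
  rw [sum_eq]
  obtain ⟨hy0, hy1⟩ := hy
  have hy14 : y * (1 - y) ≤ 1 / 4 := by nlinarith [sq_nonneg (y - 1/2)]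
  calc T / 2 * (y * (1 - y) / ↑k) ≤ T / 2 * ((1/4) / ↑k) := by gcongr
    _ = T / (8 * ↑k) := by ring
end

section
/- For every β with 0 < β ≤ 1, every positive integer d, and every x ∈ [0, 1], the Bernstein polynomial of degree d of the derivative f_β′ satisfies |B_d(f_β′; x) − f_β′(x)| ≤ 3/(8 β² d). In particular, choosing d ≥ 3/(2 β² α) with α > 0 makes the uniform approximation error on [0,1] at most α/4. -/
private lemma hinge_sqrt_pos {β : ℝ} (hβ : 0 < β) (t : ℝ) :
    0 < Real.sqrt ((1/2 - t)^2 + β^2) :=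
  Real.sqrt_pos.mpr (by positivity)

private lemma hasDerivAt_aux {β : ℝ} (hβ : 0 < β) (t : ℝ) :
    HasDerivAt (fun t : ℝ => Real.sqrt ((1/2 - t)^2 + β^2))
      ((t - 1/2) / Real.sqrt ((1/2 - t)^2 + β^2)) t := by
  have hs := hinge_sqrt_pos hβ t
  have hq : (0:ℝ) < (1/2 - t)^2 + β^2 := by positivity
  have h0 : HasDerivAt (fun t : ℝ => 1/2 - t) (-1) t := by
    simpa using (hasDerivAt_id t).const_sub (1/2:ℝ)
  have h1 : HasDerivAt (fun t : ℝ => (1/2 - t)^2 + β^2)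
      ((2:ℕ) * (1/2 - t) ^ 1 * (-1)) t := (h0.pow 2).add_const _
  have h2 := h1.sqrt hq.ne'
  convert h2 using 1
  field_simp
  ring

private lemma hasDerivAt_f {β : ℝ} (hβ : 0 < β) (t : ℝ) :
    HasDerivAt (fun t : ℝ => (1 / 2 - t + Real.sqrt ((1 / 2 - t) ^ 2 + β ^ 2)) / 2)
      (((t - 1/2) / Real.sqrt ((1/2 - t)^2 + β^2) - 1) / 2) t := by
  have h0 : HasDerivAt (fun t : ℝ => 1/2 - t) (-1) t := by
    simpa using (hasDerivAt_id t).const_sub (1/2:ℝ)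
  have := (h0.add (hasDerivAt_aux hβ t)).div_const 2
  refine this.congr_deriv (Eq.symm ?_)
  ring

private lemma hasDerivAt_g {β : ℝ} (hβ : 0 < β) (t : ℝ) :
    HasDerivAt (fun t : ℝ => ((t - 1/2) / Real.sqrt ((1/2 - t)^2 + β^2) - 1) / 2)
      (β^2 / (2 * Real.sqrt ((1/2 - t)^2 + β^2) ^ 3)) t := by
  have hs := hinge_sqrt_pos hβ t
  have hq : (0:ℝ) < (1/2 - t)^2 + β^2 := by positivity
  have h0 : HasDerivAt (fun t : ℝ => t - 1/2) 1 t := (hasDerivAt_id t).sub_const _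
  have h1 := ((h0.div (hasDerivAt_aux hβ t) hs.ne').sub_const 1).div_const 2
  refine h1.congr_deriv (Eq.symm ?_)
  have hsq : Real.sqrt ((1/2 - t)^2 + β^2) ^ 2 = (1/2 - t)^2 + β^2 :=
    Real.sq_sqrt hq.le
  set s := Real.sqrt ((1/2 - t)^2 + β^2) with hsdef
  field_simp
  linear_combination (-4) * hsq

private lemma hasDerivAt_h {β : ℝ} (hβ : 0 < β) (t : ℝ) :
    HasDerivAt (fun t : ℝ => β^2 / (2 * Real.sqrt ((1/2 - t)^2 + β^2) ^ 3))
      (-(β^2 * (3 * Real.sqrt ((1/2 - t)^2 + β^2) ^ 2 *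
          ((t - 1/2) / Real.sqrt ((1/2 - t)^2 + β^2)) * 2)) /
        (2 * Real.sqrt ((1/2 - t)^2 + β^2) ^ 3) ^ 2) t := by
  have hs := hinge_sqrt_pos hβ t
  have h1 : HasDerivAt (fun t : ℝ => 2 * Real.sqrt ((1/2 - t)^2 + β^2) ^ 3)
      ((3:ℕ) * Real.sqrt ((1/2 - t)^2 + β^2) ^ 2 *
        ((t - 1/2) / Real.sqrt ((1/2 - t)^2 + β^2)) * 2) t := by
    simpa [mul_comm] using (((hasDerivAt_aux hβ t).pow 3).const_mul (2:ℝ))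
  have h2 := (hasDerivAt_const t (β^2)).div h1 (by positivity)
  refine h2.congr_deriv (Eq.symm ?_)
  ring

private lemma h_deriv_bound {β : ℝ} (hβ : 0 < β) (t : ℝ) :
    |(-(β^2 * (3 * Real.sqrt ((1/2 - t)^2 + β^2) ^ 2 *
          ((t - 1/2) / Real.sqrt ((1/2 - t)^2 + β^2)) * 2)) /
        (2 * Real.sqrt ((1/2 - t)^2 + β^2) ^ 3) ^ 2)| ≤ 3 / (2 * β^2) := by
  have hs := hinge_sqrt_pos hβ t
  have hq : (0:ℝ) < (1/2 - t)^2 + β^2 := by positivity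
  have hsq : Real.sqrt ((1/2 - t)^2 + β^2) ^ 2 = (1/2 - t)^2 + β^2 := Real.sq_sqrt hq.le
  set s := Real.sqrt ((1/2 - t)^2 + β^2) with hsdef
  have habs : |t - 1/2| ≤ s := by
    rw [← Real.sqrt_sq_eq_abs]
    apply Real.sqrt_le_sqrt
    nlinarith
  have hval : (-(β^2 * (3 * s ^ 2 * ((t - 1/2) / s) * 2)) / (2 * s ^ 3) ^ 2)
      = -(3 * β^2 * (t - 1/2)) / (2 * s ^ 5) := by
    field_simp
  rw [hval, abs_div, abs_neg, abs_mul, abs_mul]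
  have h5 : |2 * s ^ 5| = 2 * s ^ 5 := abs_of_pos (by positivity)
  rw [h5, abs_of_pos (by norm_num : (0:ℝ) < 3), abs_of_pos (by positivity : (0:ℝ) < β^2)]
  rw [div_le_div_iff₀ (by positivity) (by positivity)]
  have hsb : β ≤ s := by
    have h := Real.sqrt_le_sqrt (show β^2 ≤ (1/2 - t)^2 + β^2 by nlinarith)
    rwa [Real.sqrt_sq hβ.le] at h
  -- 3 * β^2 * |t-1/2| * (2 β^2) ≤ 3 * (2 s^5) ; use |t-1/2| ≤ s, β ≤ s
  have h1 : 3 * β^2 * |t - 1/2| * (2 * β^2) ≤ 3 * β^2 * s * (2 * β^2) := by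
    gcongr
  have h2 : 3 * β^2 * s * (2 * β^2) ≤ 3 * (2 * s^5) := by
    nlinarith [hs, hβ, hsb, pow_le_pow_left₀ hβ.le hsb 4]
  linarith

private lemma taylor_bound {β : ℝ} (hβ : 0 < β) (x y : ℝ) :
    |((y - 1/2) / Real.sqrt ((1/2 - y)^2 + β^2) - 1) / 2
      - ((x - 1/2) / Real.sqrt ((1/2 - x)^2 + β^2) - 1) / 2
      - β^2 / (2 * Real.sqrt ((1/2 - x)^2 + β^2) ^ 3) * (y - x)|
      ≤ 3 / (2*β^2) * (y - x)^2 := by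
  set K := 3 / (2*β^2) with hK
  set g : ℝ → ℝ := fun t => ((t - 1/2) / Real.sqrt ((1/2 - t)^2 + β^2) - 1) / 2 with hg
  set h : ℝ → ℝ := fun t => β^2 / (2 * Real.sqrt ((1/2 - t)^2 + β^2) ^ 3) with hh
  have hLip : ∀ a b : ℝ, |h b - h a| ≤ K * |b - a| := by
    intro a b
    have := Convex.norm_image_sub_le_of_norm_hasDerivWithin_le
      (f := h) (f' := fun t => -(β^2 * (3 * Real.sqrt ((1/2 - t)^2 + β^2) ^ 2 *
          ((t - 1/2) / Real.sqrt ((1/2 - t)^2 + β^2)) * 2)) /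
        (2 * Real.sqrt ((1/2 - t)^2 + β^2) ^ 3) ^ 2) (s := Set.univ) (C := K)
      (fun t _ => (hasDerivAt_h hβ t).hasDerivWithinAt)
      (fun t _ => by rw [Real.norm_eq_abs, hK]; exact h_deriv_bound hβ t)
      convex_univ (Set.mem_univ a) (Set.mem_univ b)
    simpa [Real.norm_eq_abs] using this
  have key : ∀ z ∈ Set.uIcc x y, |z - x| ≤ |y - x| := by
    intro z hz
    rcases Set.mem_uIcc.mp hz with ⟨h1, h2⟩ | ⟨h1, h2⟩ <;>
      rcases abs_cases (y - x) with ⟨e, he⟩ | ⟨e, he⟩ <;>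
      rcases abs_cases (z - x) with ⟨e2, he2⟩ | ⟨e2, he2⟩ <;>
      linarith
  have hKnn : 0 ≤ K := by positivity
  have main := Convex.norm_image_sub_le_of_norm_hasDerivWithin_le
    (f := fun z => g z - g x - h x * (z - x)) (f' := fun z => h z - h x)
    (s := Set.uIcc x y) (C := K * |y - x|)
    (fun z _ => by
      have h1 := (hasDerivAt_g hβ z).sub_const (g x)
      have h2 : HasDerivAt (fun z : ℝ => h x * (z - x)) (h x) z := by
        simpa using ((hasDerivAt_id z).sub_const x).const_mul (h x)
      exact (h1.sub h2).hasDerivWithinAt)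
    (fun z hz => by
      have := (hLip x z).trans (mul_le_mul_of_nonneg_left (key z hz) hKnn)
      simpa [Real.norm_eq_abs] using this)
    (convex_uIcc x y) Set.left_mem_uIcc Set.right_mem_uIcc
  have main2 : |g y - g x - h x * (y - x)| ≤ K * |y - x| * |y - x| := by
    simpa [Real.norm_eq_abs] using main
  calc |g y - g x - h x * (y - x)| ≤ K * |y - x| * |y - x| := main2
    _ = K * (y - x)^2 := by rw [mul_assoc, abs_mul_abs_self, ← sq]

private lemma moment0 (d : ℕ) (x : ℝ) :
    ∑ v ∈ Finset.range (d + 1), (d.choose v : ℝ) * x ^ v * (1 - x) ^ (d - v) = 1 := by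
  have := congrArg (Polynomial.eval x) (bernsteinPolynomial.sum ℝ d)
  simpa [bernsteinPolynomial, Polynomial.eval_finset_sum] using this

private lemma moment1 (d : ℕ) (x : ℝ) :
    ∑ v ∈ Finset.range (d + 1),
      (v : ℝ) * ((d.choose v : ℝ) * x ^ v * (1 - x) ^ (d - v)) = d * x := by
  have := congrArg (Polynomial.eval x) (bernsteinPolynomial.sum_smul ℝ d)
  simpa [bernsteinPolynomial, Polynomial.eval_finset_sum, mul_assoc] using this

private lemma moment2 (d : ℕ) (x : ℝ) :
    ∑ v ∈ Finset.range (d + 1),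
      (v : ℝ)^2 * ((d.choose v : ℝ) * x ^ v * (1 - x) ^ (d - v))
      = d * (d - 1) * x^2 + d * x := by
  have h := congrArg (Polynomial.eval x) (bernsteinPolynomial.sum_mul_smul ℝ d)
  have h2 : ∑ v ∈ Finset.range (d + 1),
      ((v * (v-1) : ℕ) : ℝ) * ((d.choose v : ℝ) * x ^ v * (1 - x) ^ (d - v))
      = ((d * (d-1) : ℕ) : ℝ) * x^2 := by
    simpa [bernsteinPolynomial, Polynomial.eval_finset_sum, mul_assoc] using h
  have hcast : ∀ v : ℕ, ((v * (v-1) : ℕ) : ℝ) = (v:ℝ)^2 - v := by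
    rintro (_ | v)
    · simp
    · push_cast [Nat.succ_sub_one]
      ring
  rw [hcast d] at h2
  simp only [hcast, sub_mul] at h2
  rw [Finset.sum_sub_distrib, moment1] at h2
  linear_combination h2

private lemma bern_mean (d : ℕ) (hd : 0 < d) (x : ℝ) :
    ∑ v ∈ Finset.range (d + 1),
      ((v:ℝ)/d - x) * ((d.choose v : ℝ) * x ^ v * (1 - x) ^ (d - v)) = 0 := by
  have hd' : (d:ℝ) ≠ 0 := Nat.cast_ne_zero.mpr hd.ne'
  have expand : ∀ v : ℕ, ((v:ℝ)/d - x) * ((d.choose v : ℝ) * x ^ v * (1 - x) ^ (d - v))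
      = (1/(d:ℝ)) * ((v:ℝ) * ((d.choose v : ℝ) * x ^ v * (1 - x) ^ (d - v)))
        + (-x) * ((d.choose v : ℝ) * x ^ v * (1 - x) ^ (d - v)) := by
    intro v; field_simp; ring
  rw [Finset.sum_congr rfl fun v _ => expand v, Finset.sum_add_distrib,
    ← Finset.mul_sum, ← Finset.mul_sum, moment1, moment0]
  field_simp
  ring

private lemma bern_var (d : ℕ) (hd : 0 < d) (x : ℝ) :
    ∑ v ∈ Finset.range (d + 1),
      ((v:ℝ)/d - x)^2 * ((d.choose v : ℝ) * x ^ v * (1 - x) ^ (d - v))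
      = x * (1 - x) / d := by
  have hd' : (d:ℝ) ≠ 0 := Nat.cast_ne_zero.mpr hd.ne'
  have expand : ∀ v : ℕ, ((v:ℝ)/d - x)^2 * ((d.choose v : ℝ) * x ^ v * (1 - x) ^ (d - v))
      = (1/(d:ℝ)^2) * ((v:ℝ)^2 * ((d.choose v : ℝ) * x ^ v * (1 - x) ^ (d - v)))
        + ((-(2*x)/d) * ((v:ℝ) * ((d.choose v : ℝ) * x ^ v * (1 - x) ^ (d - v)))
          + x^2 * ((d.choose v : ℝ) * x ^ v * (1 - x) ^ (d - v))) := by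
    intro v; field_simp; ring
  rw [Finset.sum_congr rfl fun v _ => expand v, Finset.sum_add_distrib,
    Finset.sum_add_distrib, ← Finset.mul_sum, ← Finset.mul_sum, ← Finset.mul_sum,
    moment2, moment1, moment0]
  field_simp
  ring

/-- For `0 < β ≤ 1`, every positive integer `d`, and `x ∈ [0,1]`, the degree-`d`
Bernstein polynomial of `f_β′` approximates `f_β′` within `3/(8β²d)`; in
particular, choosing `d ≥ 3/(2β²α)` with `α > 0` makes the error at most `α/4`. -/
theorem bernstein_approx_smoothed_hinge_deriv (β : ℝ) (hβ : 0 < β) (hβ1 : β ≤ 1)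
    (d : ℕ) (hd : 0 < d) (x : ℝ) (hx : x ∈ Set.Icc (0 : ℝ) 1) :
    let f : ℝ → ℝ := fun t => (1 / 2 - t + Real.sqrt ((1 / 2 - t) ^ 2 + β ^ 2)) / 2
    let B : ℝ := ∑ v ∈ Finset.range (d + 1),
      deriv f ((v : ℝ) / d) * (d.choose v : ℝ) * x ^ v * (1 - x) ^ (d - v)
    |B - deriv f x| ≤ 3 / (8 * β ^ 2 * d) ∧
    ∀ α : ℝ, 0 < α → 3 / (2 * β ^ 2 * α) ≤ (d : ℝ) → |B - deriv f x| ≤ α / 4 := by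
  intro f B
  obtain ⟨hx0, hx1⟩ := hx
  have hd0 : (0:ℝ) < d := Nat.cast_pos.mpr hd
  set g : ℝ → ℝ := fun t => ((t - 1/2) / Real.sqrt ((1/2 - t)^2 + β^2) - 1) / 2 with hg
  set h : ℝ → ℝ := fun t => β^2 / (2 * Real.sqrt ((1/2 - t)^2 + β^2) ^ 3) with hh
  set w : ℕ → ℝ := fun v => (d.choose v : ℝ) * x ^ v * (1 - x) ^ (d - v) with hw
  have hderiv : ∀ t, deriv f t = g t := fun t => (hasDerivAt_f hβ t).deriv
  have hwnn : ∀ v, 0 ≤ w v := fun v => by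
    simp only [hw]
    have h1 : (0:ℝ) ≤ x ^ v := pow_nonneg hx0 v
    have h2 : (0:ℝ) ≤ (1 - x) ^ (d - v) := pow_nonneg (by linarith) _
    positivity
  have m0 : ∑ v ∈ Finset.range (d+1), w v = 1 := moment0 d x
  have hmean : ∑ v ∈ Finset.range (d+1), ((v:ℝ)/d - x) * w v = 0 := bern_mean d hd x
  have hvar : ∑ v ∈ Finset.range (d+1), ((v:ℝ)/d - x)^2 * w v = x*(1-x)/d :=
    bern_var d hd x
  have htay : ∀ v : ℕ, |g ((v:ℝ)/d) - g x - h x * ((v:ℝ)/d - x)|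
      ≤ 3/(2*β^2) * ((v:ℝ)/d - x)^2 := fun v => taylor_bound hβ x ((v:ℝ)/d)
  have hB : B = ∑ v ∈ Finset.range (d+1), g ((v:ℝ)/d) * w v := by
    show (∑ v ∈ Finset.range (d + 1),
      deriv f ((v : ℝ) / d) * (d.choose v : ℝ) * x ^ v * (1 - x) ^ (d - v)) = _
    refine Finset.sum_congr rfl fun v _ => ?_
    rw [hderiv]
    simp only [hw]
    ring
  have hBsub : B - deriv f x = ∑ v ∈ Finset.range (d+1),
      (g ((v:ℝ)/d) - g x - h x * ((v:ℝ)/d - x)) * w v := by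
    rw [hB, hderiv x]
    calc (∑ v ∈ Finset.range (d+1), g ((v:ℝ)/d) * w v) - g x
        = (∑ v ∈ Finset.range (d+1), g ((v:ℝ)/d) * w v)
            - g x * (∑ v ∈ Finset.range (d+1), w v)
            - h x * (∑ v ∈ Finset.range (d+1), ((v:ℝ)/d - x) * w v) := by
          rw [m0, hmean]; ring
      _ = ∑ v ∈ Finset.range (d+1), (g ((v:ℝ)/d) * w v - g x * w v
            - h x * (((v:ℝ)/d - x) * w v)) := by
          rw [Finset.sum_sub_distrib, Finset.sum_sub_distrib, Finset.mul_sum, Finset.mul_sum]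
      _ = ∑ v ∈ Finset.range (d+1), (g ((v:ℝ)/d) - g x - h x * ((v:ℝ)/d - x)) * w v :=
          Finset.sum_congr rfl fun v _ => by ring
  have hxx : x * (1-x) ≤ 1/4 := by nlinarith [sq_nonneg (x - 1/2)]
  have bound1 : |B - deriv f x| ≤ 3 / (8 * β ^ 2 * d) := by
    rw [hBsub]
    calc |∑ v ∈ Finset.range (d+1), (g ((v:ℝ)/d) - g x - h x * ((v:ℝ)/d - x)) * w v|
        ≤ ∑ v ∈ Finset.range (d+1), |(g ((v:ℝ)/d) - g x - h x * ((v:ℝ)/d - x)) * w v| :=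
          Finset.abs_sum_le_sum_abs _ _
      _ ≤ ∑ v ∈ Finset.range (d+1), (3/(2*β^2) * ((v:ℝ)/d - x)^2) * w v := by
          refine Finset.sum_le_sum fun v _ => ?_
          rw [abs_mul, abs_of_nonneg (hwnn v)]
          exact mul_le_mul_of_nonneg_right (htay v) (hwnn v)
      _ = 3/(2*β^2) * ∑ v ∈ Finset.range (d+1), ((v:ℝ)/d - x)^2 * w v := by
          rw [Finset.mul_sum]
          exact Finset.sum_congr rfl fun v _ => by ring
      _ = 3/(2*β^2) * (x*(1-x)/d) := by rw [hvar]
      _ ≤ 3/(2*β^2) * ((1/4)/d) := by gcongr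
      _ = 3 / (8*β^2*d) := by field_simp; ring
  refine ⟨bound1, ?_⟩
  intro α hα hdα
  refine bound1.trans ?_
  rw [div_le_div_iff₀ (by positivity) (by norm_num)]
  have h3 := (div_le_iff₀ (by positivity : (0:ℝ) < 2*β^2*α)).mp hdα
  nlinarith [h3]
end
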